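/- Let D ⊆ ℝ^d, let F : D → ℝ, and suppose there exist functions a : ℝ → ℝ^d and b : ℝ → ℝ such that for every t in the image of F and every e ∈ D one has F(e) ≥ t ⇔ ⟨a(t), e⟩ + b(t) ≤ 0 and F(e) ≤ t ⇔ ⟨a(t), e⟩ + b(t) ≥ 0. Let E ⊆ D be a nonempty compact set, and let F⋆ = max over e ∈ E of F(e). Then for every e⋆ ∈ E: e⋆ minimizes the linear function e ↦ ⟨a(F⋆), e⟩ over E if and only if F(e⋆) = F⋆. -/
import Mathlib


open RealInnerProductSpace

/-- If the level sets of `F` on `D` are hyperplanes given by `a : ℝ → ℝ^d` and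
`b : ℝ → ℝ` (as in the characterization of pseudo-linear functions), `E ⊆ D` is a
nonempty compact set and `F⋆` is the maximum of `F` over `E`, then a point `e⋆ ∈ E`
minimizes `e ↦ ⟪a F⋆, e⟫` over `E` if and only if `F e⋆ = F⋆`. -/
theorem maximizer_iff_costSensitive_minimizer {d : ℕ}
    (D : Set (EuclideanSpace ℝ (Fin d))) (F : EuclideanSpace ℝ (Fin d) → ℝ)
    (a : ℝ → EuclideanSpace ℝ (Fin d)) (b : ℝ → ℝ)
    (hab : ∀ t ∈ F '' D, ∀ e ∈ D,
      (F e ≥ t ↔ ⟪a t, e⟫ + b t ≤ 0) ∧ (F e ≤ t ↔ ⟪a t, e⟫ + b t ≥ 0))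
    (E : Set (EuclideanSpace ℝ (Fin d))) (hED : E ⊆ D)
    (hEne : E.Nonempty) (hEcomp : IsCompact E)
    (Fstar : ℝ) (hFstar : IsGreatest (F '' E) Fstar) :
    ∀ estar ∈ E,
      ((∀ e ∈ E, ⟪a Fstar, estar⟫ ≤ ⟪a Fstar, e⟫) ↔ F estar = Fstar) := by
  intro estar hestar
  obtain ⟨e0, he0E, he0⟩ := hFstar.1
  have hFD : Fstar ∈ F '' D := ⟨e0, hED he0E, he0⟩
  have hle : ∀ e ∈ E, F e ≤ Fstar := fun e he => hFstar.2 ⟨e, he, rfl⟩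
  have hge : ∀ e ∈ E, -(b Fstar) ≤ ⟪a Fstar, e⟫ := by
    intro e he
    have := (hab Fstar hFD e (hED he)).2.mp (hle e he)
    linarith
  have he0' : ⟪a Fstar, e0⟫ = -(b Fstar) := by
    have h1 := (hab Fstar hFD e0 (hED he0E)).1.mp (le_of_eq he0.symm)
    have h2 := hge e0 he0E
    linarith
  constructor
  · intro hmin
    have h1 : ⟪a Fstar, estar⟫ ≤ -(b Fstar) := he0' ▸ hmin e0 he0E
    have h2 := hge estar hestar
    have : F estar ≥ Fstar :=
      (hab Fstar hFD estar (hED hestar)).1.mpr (by linarith)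
    exact le_antisymm (hle estar hestar) this
  · intro heq e he
    have h1 := (hab Fstar hFD estar (hED hestar)).1.mp (le_of_eq heq.symm)
    have h2 := hge e he
    linarith
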